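/- Let H be a complex Hilbert space and let S, T be normal bounded linear operators on H with Cartesian decompositions S = A + iC and T = B + iD. Suppose a₁ ≤ A ≤ a₂, b₁ ≤ B ≤ b₂, c₁ ≤ C ≤ c₂ and d₁ ≤ D ≤ d₂ for real numbers a₁, a₂, b₁, b₂, c₁, c₂, d₁, d₂. Then ‖ST − TS‖ ≤ (1/2)·√((a₂−a₁)² + (c₂−c₁)²)·√((b₂−b₁)² + (d₂−d₁)²). -/

import Mathlib

lemma aux_sa_norm_le {H : Type*} [NormedAddCommGroup H] [InnerProductSpace ℂ H]
    [CompleteSpace H] (A : H →L[ℂ] H) (hA : IsSelfAdjoint A) {K : ℝ} (hK : 0 ≤ K)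
    (h : ∀ x : H, |(inner ℂ (A x) x : ℂ).re| ≤ K * ‖x‖ ^ 2) : ‖A‖ ≤ K := by
  refine A.opNorm_le_bound hK fun x => ?_
  rcases eq_or_ne (A x) 0 with h0 | h0
  · simp [h0]; positivity
  have hx0 : x ≠ 0 := fun hx => h0 (by simp [hx])
  have hAx : (0:ℝ) < ‖A x‖ := norm_pos_iff.mpr h0
  have hxpos : (0:ℝ) < ‖x‖ := norm_pos_iff.mpr hx0
  set c : ℝ := ‖x‖ / ‖A x‖ with hc
  have hcpos : 0 < c := div_pos hxpos hAx
  set y : H := (c : ℂ) • A x with hy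
  have hyn : ‖y‖ = ‖x‖ := by
    rw [hy, norm_smul, Complex.norm_real, Real.norm_eq_abs, abs_of_pos hcpos, hc,
      div_mul_cancel₀ _ hAx.ne']
  have hsymm : (inner ℂ (A y) x : ℂ).re = (inner ℂ (A x) y : ℂ).re := by
    have h2 : (inner ℂ (A y) x : ℂ) = inner ℂ y (A x) := hA.isSymmetric y x
    rw [h2]
    exact inner_re_symm (𝕜 := ℂ) y (A x)
  have hre : (inner ℂ (A x) y : ℂ).re = c * ‖A x‖ ^ 2 := by
    rw [hy, inner_smul_right, inner_self_eq_norm_sq_to_K]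
    have : ((‖A x‖ : ℂ) ^ 2).re = ‖A x‖ ^ 2 := by norm_cast
    simp [this]
  have e1 : (inner ℂ (A (x + y)) (x + y) : ℂ).re - (inner ℂ (A (x - y)) (x - y) : ℂ).re
      = 4 * (c * ‖A x‖ ^ 2) := by
    simp only [map_add, map_sub, inner_add_left, inner_add_right, inner_sub_left,
      inner_sub_right, Complex.add_re, Complex.sub_re]
    linarith [hsymm, hre]
  have h1 := (abs_le.mp (h (x + y))).2
  have h2 := neg_le.mp (abs_le.mp (h (x - y))).1
  have hpar : ‖x + y‖ ^ 2 + ‖x - y‖ ^ 2 = 2 * (‖x‖ ^ 2 + ‖y‖ ^ 2) := by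
    have := parallelogram_law_with_norm ℂ x y
    nlinarith [this]
  have h3 : K * ‖x + y‖ ^ 2 + K * ‖x - y‖ ^ 2 = 4 * (K * ‖x‖ ^ 2) := by
    rw [← mul_add, hpar, hyn]; ring
  have key : c * ‖A x‖ ^ 2 ≤ K * ‖x‖ ^ 2 := by linarith
  have hkey2 : ‖x‖ * ‖A x‖ ≤ K * ‖x‖ ^ 2 := by
    have hcc : c * ‖A x‖ ^ 2 = ‖x‖ * ‖A x‖ := by
      rw [hc]; field_simp
    linarith [hcc ▸ key]
  nlinarith [hkey2, hxpos]

lemma aux_normal_norm_sq {H : Type*} [NormedAddCommGroup H] [InnerProductSpace ℂ H]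
    [CompleteSpace H] (X Y : H →L[ℂ] H) (hX : IsSelfAdjoint X) (hY : IsSelfAdjoint Y)
    (hcomm : X * Y = Y * X) :
    ‖X + Complex.I • Y‖ ^ 2 ≤ ‖X‖ ^ 2 + ‖Y‖ ^ 2 := by
  have hstar : star (X + Complex.I • Y) * (X + Complex.I • Y) = X * X + Y * Y := by
    rw [star_add, star_smul, hX.star_eq, hY.star_eq]
    simp only [Complex.star_def, Complex.conj_I]
    rw [add_mul, mul_add, mul_add]
    rw [smul_mul_assoc, smul_mul_assoc, mul_smul_comm, mul_smul_comm, smul_smul]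
    rw [hcomm]
    simp [Complex.I_mul_I]
  have h1 : ‖X + Complex.I • Y‖ ^ 2 = ‖star (X + Complex.I • Y) * (X + Complex.I • Y)‖ := by
    rw [CStarRing.norm_star_mul_self, sq]
  rw [h1, hstar]
  have h2 : ‖X * X‖ = ‖X‖ ^ 2 := by
    nth_rewrite 1 [← hX.star_eq]
    rw [CStarRing.norm_star_mul_self, sq]
  have h3 : ‖Y * Y‖ = ‖Y‖ ^ 2 := by
    nth_rewrite 1 [← hY.star_eq]
    rw [CStarRing.norm_star_mul_self, sq]
  calc ‖X * X + Y * Y‖ ≤ ‖X * X‖ + ‖Y * Y‖ := norm_add_le _ _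
    _ = ‖X‖ ^ 2 + ‖Y‖ ^ 2 := by rw [h2, h3]

lemma aux_expand {E : Type*} [Ring E] [Algebra ℂ E] (X Y : E) (s t : ℂ) :
    (X + s • Y) * (X + t • Y)
      = X * X + (s * t) • (Y * Y) + t • (X * Y) + s • (Y * X) := by
  simp only [add_mul, mul_add, smul_mul_assoc, mul_smul_comm, smul_smul, smul_add, mul_comm t s]
  abel

lemma aux_mul_comm_of_normal {H : Type*} [NormedAddCommGroup H] [InnerProductSpace ℂ H]
    [CompleteSpace H] {S A C : H →L[ℂ] H}
    (hS : IsStarNormal S) (hA : IsSelfAdjoint A) (hC : IsSelfAdjoint C)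
    (hSdec : S = A + Complex.I • C) : A * C = C * A := by
  have h := hS.star_comm_self.eq
  rw [hSdec, star_add, star_smul, hA.star_eq, hC.star_eq] at h
  simp only [Complex.star_def, Complex.conj_I] at h
  rw [aux_expand, aux_expand] at h
  have h2 : (2 * Complex.I) • (A * C) = (2 * Complex.I) • (C * A) := by
    linear_combination (norm := module) h
  have hne : (2 * Complex.I : ℂ) ≠ 0 := by
    simp [Complex.I_ne_zero]
  exact smul_right_injective (H →L[ℂ] H) hne h2


lemma aux_shift_comm {E : Type*} [Ring E] [Algebra ℂ E] (S T : E) (l m : ℂ) :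
    (S - l • 1) * (T - m • 1) - (T - m • 1) * (S - l • 1) = S * T - T * S := by
  simp only [sub_mul, mul_sub, smul_mul_assoc, mul_smul_comm, smul_smul, smul_sub, one_mul,
    mul_one]
  module

lemma aux_sa_shift {H : Type*} [NormedAddCommGroup H] [InnerProductSpace ℂ H]
    [CompleteSpace H] {A : H →L[ℂ] H} (hA : IsSelfAdjoint A) (r : ℝ) :
    IsSelfAdjoint (A - ((r : ℂ)) • (1 : H →L[ℂ] H)) := by
  refine hA.sub ?_
  rw [IsSelfAdjoint, star_smul, star_one, Complex.star_def, Complex.conj_ofReal]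

lemma aux_shifted {H : Type*} [NormedAddCommGroup H] [InnerProductSpace ℂ H]
    [CompleteSpace H] (A : H →L[ℂ] H) (hA : IsSelfAdjoint A) (a₁ a₂ : ℝ)
    (h1 : ∀ x : H, a₁ * ‖x‖ ^ 2 ≤ (inner ℂ (A x) x : ℂ).re)
    (h2 : ∀ x : H, (inner ℂ (A x) x : ℂ).re ≤ a₂ * ‖x‖ ^ 2) :
    ‖A - (((a₁ + a₂) / 2 : ℝ) : ℂ) • (1 : H →L[ℂ] H)‖ ≤ |a₂ - a₁| / 2 := by
  refine aux_sa_norm_le _ (aux_sa_shift hA _) (by positivity) fun x => ?_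
  have hx : (inner ℂ ((A - (((a₁ + a₂) / 2 : ℝ) : ℂ) • (1 : H →L[ℂ] H)) x) x : ℂ).re
      = (inner ℂ (A x) x : ℂ).re - (a₁ + a₂) / 2 * ‖x‖ ^ 2 := by
    simp only [ContinuousLinearMap.sub_apply, ContinuousLinearMap.smul_apply,
      ContinuousLinearMap.one_apply, inner_sub_left, inner_smul_left, Complex.sub_re]
    rw [inner_self_eq_norm_sq_to_K]
    have : ((‖x‖ : ℂ) ^ 2).re = ‖x‖ ^ 2 := by norm_cast
    simp [Complex.conj_ofReal, Complex.mul_re, this]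
    ring_nf
    simp [Complex.mul_re]
    ring
  rw [hx, abs_le]
  constructor
  · nlinarith [h1 x, mul_le_mul_of_nonneg_right (le_abs_self (a₂ - a₁)) (sq_nonneg ‖x‖)]
  · nlinarith [h2 x, mul_le_mul_of_nonneg_right (le_abs_self (a₂ - a₁)) (sq_nonneg ‖x‖)]

lemma aux_half {H : Type*} [NormedAddCommGroup H] [InnerProductSpace ℂ H] [CompleteSpace H]
    (S A C : H →L[ℂ] H) (hS : IsStarNormal S) (hA : IsSelfAdjoint A) (hC : IsSelfAdjoint C)
    (hSdec : S = A + Complex.I • C) (a₁ a₂ c₁ c₂ : ℝ)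
    (hA₁ : ∀ x : H, a₁ * ‖x‖ ^ 2 ≤ (inner ℂ (A x) x : ℂ).re)
    (hA₂ : ∀ x : H, (inner ℂ (A x) x : ℂ).re ≤ a₂ * ‖x‖ ^ 2)
    (hC₁ : ∀ x : H, c₁ * ‖x‖ ^ 2 ≤ (inner ℂ (C x) x : ℂ).re)
    (hC₂ : ∀ x : H, (inner ℂ (C x) x : ℂ).re ≤ c₂ * ‖x‖ ^ 2) :
    ‖S - ((((a₁ + a₂) / 2 : ℝ) : ℂ) + Complex.I * (((c₁ + c₂) / 2 : ℝ) : ℂ)) • 1‖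
      ≤ (1 / 2) * Real.sqrt ((a₂ - a₁) ^ 2 + (c₂ - c₁) ^ 2) := by
  set A' := A - (((a₁ + a₂) / 2 : ℝ) : ℂ) • (1 : H →L[ℂ] H) with hA'def
  set C' := C - (((c₁ + c₂) / 2 : ℝ) : ℂ) • (1 : H →L[ℂ] H) with hC'def
  have hA'sa : IsSelfAdjoint A' := aux_sa_shift hA _
  have hC'sa : IsSelfAdjoint C' := aux_sa_shift hC _
  have hAC := aux_mul_comm_of_normal hS hA hC hSdec
  have hcomm : A' * C' = C' * A' := by
    rw [hA'def, hC'def]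
    simp only [sub_mul, mul_sub, smul_mul_assoc, mul_smul_comm, smul_smul, smul_sub, one_mul,
      mul_one, hAC]
    module
  have hdec : S - ((((a₁ + a₂) / 2 : ℝ) : ℂ) + Complex.I * (((c₁ + c₂) / 2 : ℝ) : ℂ)) • 1
      = A' + Complex.I • C' := by
    rw [hSdec, hA'def, hC'def]
    module
  rw [hdec]
  have hnormA := aux_shifted A hA a₁ a₂ hA₁ hA₂
  have hnormC := aux_shifted C hC c₁ c₂ hC₁ hC₂
  have hsq := aux_normal_norm_sq A' C' hA'sa hC'sa hcomm
  have ha2 : ‖A'‖ ^ 2 ≤ (|a₂ - a₁| / 2) ^ 2 := by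
    exact pow_le_pow_left₀ (norm_nonneg _) hnormA 2
  have hc2 : ‖C'‖ ^ 2 ≤ (|c₂ - c₁| / 2) ^ 2 := by
    exact pow_le_pow_left₀ (norm_nonneg _) hnormC 2
  have h2 : ‖A' + Complex.I • C'‖ ^ 2 ≤ ((a₂ - a₁) ^ 2 + (c₂ - c₁) ^ 2) / 4 := by
    nlinarith [sq_abs (a₂ - a₁), sq_abs (c₂ - c₁)]
  have hsqrt : (1 / 2 : ℝ) * Real.sqrt ((a₂ - a₁) ^ 2 + (c₂ - c₁) ^ 2)
      = Real.sqrt (((a₂ - a₁) ^ 2 + (c₂ - c₁) ^ 2) / 4) := by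
    rw [show ((a₂ - a₁) ^ 2 + (c₂ - c₁) ^ 2) / 4
        = (1 / 4) * ((a₂ - a₁) ^ 2 + (c₂ - c₁) ^ 2) by ring,
      Real.sqrt_mul (by norm_num : (0:ℝ) ≤ 1 / 4),
      show Real.sqrt (1 / 4) = 1 / 2 by
        rw [show (1 / 4 : ℝ) = (1 / 2) ^ 2 by norm_num]
        exact Real.sqrt_sq (by norm_num)]
  rw [hsqrt]
  rw [show ‖A' + Complex.I • C'‖ = Real.sqrt (‖A' + Complex.I • C'‖ ^ 2) from
    (Real.sqrt_sq (norm_nonneg _)).symm]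
  exact Real.sqrt_le_sqrt h2


/-- For normal operators `S = A + iC`, `T = B + iD` with
`a₁ ≤ A ≤ a₂`, `b₁ ≤ B ≤ b₂`, `c₁ ≤ C ≤ c₂`, `d₁ ≤ D ≤ d₂`, we have
`‖ST − TS‖ ≤ (1/2)√((a₂−a₁)² + (c₂−c₁)²)·√((b₂−b₁)² + (d₂−d₁)²)`. -/
theorem commutator_norm_bound_of_cartesian
    {H : Type*} [NormedAddCommGroup H] [InnerProductSpace ℂ H] [CompleteSpace H]
    (S T A B C D : H →L[ℂ] H)
    (hS : IsStarNormal S) (hT : IsStarNormal T)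
    (hA : IsSelfAdjoint A) (hB : IsSelfAdjoint B)
    (hC : IsSelfAdjoint C) (hD : IsSelfAdjoint D)
    (hSdec : S = A + Complex.I • C) (hTdec : T = B + Complex.I • D)
    (a₁ a₂ b₁ b₂ c₁ c₂ d₁ d₂ : ℝ)
    (hA₁ : ∀ x : H, a₁ * ‖x‖ ^ 2 ≤ (inner ℂ (A x) x : ℂ).re)
    (hA₂ : ∀ x : H, (inner ℂ (A x) x : ℂ).re ≤ a₂ * ‖x‖ ^ 2)
    (hB₁ : ∀ x : H, b₁ * ‖x‖ ^ 2 ≤ (inner ℂ (B x) x : ℂ).re)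
    (hB₂ : ∀ x : H, (inner ℂ (B x) x : ℂ).re ≤ b₂ * ‖x‖ ^ 2)
    (hC₁ : ∀ x : H, c₁ * ‖x‖ ^ 2 ≤ (inner ℂ (C x) x : ℂ).re)
    (hC₂ : ∀ x : H, (inner ℂ (C x) x : ℂ).re ≤ c₂ * ‖x‖ ^ 2)
    (hD₁ : ∀ x : H, d₁ * ‖x‖ ^ 2 ≤ (inner ℂ (D x) x : ℂ).re)
    (hD₂ : ∀ x : H, (inner ℂ (D x) x : ℂ).re ≤ d₂ * ‖x‖ ^ 2) :
    ‖S * T - T * S‖ ≤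
      (1 / 2) * Real.sqrt ((a₂ - a₁) ^ 2 + (c₂ - c₁) ^ 2) *
        Real.sqrt ((b₂ - b₁) ^ 2 + (d₂ - d₁) ^ 2) := by
  have hS' := aux_half S A C hS hA hC hSdec a₁ a₂ c₁ c₂ hA₁ hA₂ hC₁ hC₂
  have hT' := aux_half T B D hT hB hD hTdec b₁ b₂ d₁ d₂ hB₁ hB₂ hD₁ hD₂
  set lS : ℂ := (((a₁ + a₂) / 2 : ℝ) : ℂ) + Complex.I * (((c₁ + c₂) / 2 : ℝ) : ℂ) with hlS
  set lT : ℂ := (((b₁ + b₂) / 2 : ℝ) : ℂ) + Complex.I * (((d₁ + d₂) / 2 : ℝ) : ℂ) with hlT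
  rw [← aux_shift_comm S T lS lT]
  set S' := S - lS • (1 : H →L[ℂ] H)
  set T' := T - lT • (1 : H →L[ℂ] H)
  have hnn : (0:ℝ) ≤ Real.sqrt ((b₂ - b₁) ^ 2 + (d₂ - d₁) ^ 2) := Real.sqrt_nonneg _
  have hnn2 : (0:ℝ) ≤ Real.sqrt ((a₂ - a₁) ^ 2 + (c₂ - c₁) ^ 2) := Real.sqrt_nonneg _
  calc ‖S' * T' - T' * S'‖ ≤ ‖S' * T'‖ + ‖T' * S'‖ := norm_sub_le _ _
    _ ≤ ‖S'‖ * ‖T'‖ + ‖T'‖ * ‖S'‖ := add_le_add (norm_mul_le _ _) (norm_mul_le _ _)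
    _ ≤ (1 / 2) * Real.sqrt ((a₂ - a₁) ^ 2 + (c₂ - c₁) ^ 2) *
        Real.sqrt ((b₂ - b₁) ^ 2 + (d₂ - d₁) ^ 2) := by
      nlinarith [norm_nonneg S', norm_nonneg T', hS', hT',
        mul_le_mul hS' hT' (norm_nonneg T') (by positivity)]
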